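/- Let Λ be the E₈ root lattice (positive definite, even) and let r ≥ 2 be an integer. If v ∈ Λ is a minimal representative of its coset in Λ/rΛ (i.e., v/r lies in the Voronoi cell around 0) and v² ≤ r², with v² ≡ r² - r + 2 (mod 2r) forced by χ ∈ Z and the requirement (r² - r + 2 - v²)/(2r) ≤ 0 for all coset representatives, then v² = r² - r + 2 and the Euler characteristic (r² - r + 2 - v²)/(2r) equals 0. -/

import Mathlib

/-- Let `Λ` be the E₈ root lattice (a positive definite even lattice,
encoded by the symmetric bilinear form `B`) and `r ≥ 2`.  Suppose `v ∈ Λ` is a minimal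
representative of its coset in `Λ/rΛ` (`v/r` lies in the Voronoi cell around `0`, i.e.
`v² ≤ (v - rλ)²` for all `λ ∈ Λ`) with `v² ≤ r²` (the maximum of `w²` over the Voronoi
cell is `1`), suppose `2r ∣ r² - r + 2 - v²` (integrality of `χ`), and suppose
`(r² - r + 2 - w²)/(2r) ≤ 0` for all coset representatives `w = v + rλ`.  Then
`v² = r² - r + 2` and the Euler characteristic `(r² - r + 2 - v²)/(2r)` equals `0`. -/
theorem minimal_coset_representative_euler_char
    {L : Type*} [AddCommGroup L] [Module ℤ L]
    (B : L →ₗ[ℤ] L →ₗ[ℤ] ℤ) (hsymm : ∀ x y : L, B x y = B y x)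
    (hpos : ∀ x : L, x ≠ 0 → 0 < B x x) (heven : ∀ x : L, 2 ∣ B x x)
    (r : ℤ) (hr : 2 ≤ r) (v : L)
    (hVoronoi : ∀ w : L, B v v ≤ B (v - r • w) (v - r • w))
    (hcell : B v v ≤ r ^ 2)
    (hint : (2 * r) ∣ (r ^ 2 - r + 2 - B v v))
    (hnonpos : ∀ w : L, r ^ 2 - r + 2 - B (v + r • w) (v + r • w) ≤ 0) :
    B v v = r ^ 2 - r + 2 ∧ (r ^ 2 - r + 2 - B v v) / (2 * r) = 0 := by
  have h0 := hnonpos 0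
  simp only [zsmul_zero, add_zero] at h0
  obtain ⟨k, hk⟩ := hint
  have hk0 : k ≤ 0 := by nlinarith
  have hk1 : -1 < k := by nlinarith
  have : k = 0 := by omega
  have hz : r ^ 2 - r + 2 - B v v = 0 := by rw [hk, this, mul_zero]
  constructor
  · omega
  · rw [hk, this, mul_zero, Int.zero_ediv]
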